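/- For all integers q ≥ 2 and n ≥ 1, and under each of the scenarios (∗•) and (••), the family 𝓖_q is n-cell implementable if and only if q ≤ 2n + 1. -/

import Mathlib

/-- The alphabet 𝔹• = {0, 1, ∗, •}. -/
inductive BB : Type
  | zero
  | one
  | star
  | reject
deriving DecidableEq

instance instFintypeBB : Fintype BB :=
  ⟨{BB.zero, BB.one, BB.star, BB.reject}, fun x => by cases x <;> simp⟩

/-- The cell function T : 𝔹• × 𝔹• → 𝔹: T(u,ϑ) = 1 iff u = ∗, or ϑ = ∗,
or u,ϑ ∈ 𝔹 with u = ϑ. -/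
def Tcell : BB → BB → Bool
  | BB.star, _ => true
  | _, BB.star => true
  | BB.zero, BB.zero => true
  | BB.one, BB.one => true
  | _, _ => false

/-- The word-level function T(u,ϑ) = ⋀_{j<n} T(u_j, ϑ_j). -/
def Tword {n : ℕ} (u θ : Fin n → BB) : Bool :=
  decide (∀ j, Tcell (u j) (θ j) = true)

/-- The alphabet 𝔹 = {0,1} ⊆ 𝔹•. -/
def Bcirc : Set BB := {BB.zero, BB.one}

/-- The alphabet 𝔹∗ = {0,1,∗} ⊆ 𝔹•. -/
def Bstar : Set BB := {BB.zero, BB.one, BB.star}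

/-- The full alphabet 𝔹•. -/
def Bdot : Set BB := Set.univ

/-- A family Φ of functions {0,…,q−1} → 𝔹 is n-cell implementable under
scenario (A,B) if there are mappings u : {0,…,q−1} → A^n and ϑ : Φ → B^n
with f(x) = T(u(x), ϑ(f)) for all f ∈ Φ and x. -/
def Implementable (A B : Set BB) (n q : ℕ) (Φ : Set (Fin q → Bool)) : Prop :=
  ∃ u : Fin q → Fin n → BB, ∃ θ : (Fin q → Bool) → Fin n → BB,
    (∀ x j, u x j ∈ A) ∧ (∀ f ∈ Φ, ∀ j, θ f j ∈ B) ∧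
    (∀ f ∈ Φ, ∀ x, f x = Tword (u x) (θ f))

/-- The family 𝓔_q = { x ↦ [x = t] : t ∈ [q⟩ }. -/
def Eset (q : ℕ) : Set (Fin q → Bool) :=
  { f | ∃ t : Fin q, f = fun x => decide (x = t) }

/-- The family 𝓝_q = { x ↦ [x ≠ t] : t ∈ [q⟩ }. -/
def Nset (q : ℕ) : Set (Fin q → Bool) :=
  { f | ∃ t : Fin q, f = fun x => decide (x ≠ t) }

/-- The family 𝓖_q = { x ↦ [x ≥ t] : t ∈ [q⟩ }. -/
def Gset (q : ℕ) : Set (Fin q → Bool) :=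
  { f | ∃ t : Fin q, f = fun x => decide (t ≤ x) }

/-- The family 𝓛_q = { x ↦ [x ≤ t] : t ∈ [q⟩ }. -/
def Lset (q : ℕ) : Set (Fin q → Bool) :=
  { f | ∃ t : Fin q, f = fun x => decide (x ≤ t) }

-- auxiliary lemmas
lemma Tcell_star_right (a : BB) : Tcell a BB.star = true := by cases a <;> rfl

lemma Tcell_star_left (w : BB) : Tcell BB.star w = true := by cases w <;> rfl

lemma star_of : ∀ (c b x w1 w2 : BB),
    Tcell c w1 = false → Tcell b w1 = true → Tcell b w2 = false →
    Tcell x w1 = true → Tcell x w2 = true → x = BB.star := by decide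

lemma ft_inj {q : ℕ} {t t' : Fin q}
    (h : (fun x : Fin q => decide (t ≤ x)) = (fun x : Fin q => decide (t' ≤ x))) : t = t' := by
  have h1 := congrFun h t
  have h2 := congrFun h t'
  simp only [decide_eq_decide] at h1 h2
  exact le_antisymm (h2.mpr le_rfl) (h1.mp le_rfl)

lemma Gset_impl (q n : ℕ) (hqn : q ≤ 2 * n + 1) :
    Implementable Bstar Bdot n q (Gset q) := by
  classical
  set U : Fin q → Fin n → BB := fun x j =>
    if (x : ℕ) < 2 * (j : ℕ) + 1 then BB.zero
    else if (x : ℕ) = 2 * (j : ℕ) + 1 then BB.one else BB.star with hU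
  set V : ℕ → Fin n → BB := fun m j =>
    if m = 2 * (j : ℕ) + 1 then BB.one
    else if m = 2 * (j : ℕ) + 2 then BB.reject else BB.star with hV
  have main : ∀ m : ℕ, m ≤ 2 * n → ∀ x : Fin q,
      decide (m ≤ (x : ℕ)) = Tword (U x) (V m) := by
    intro m hm x
    rcases Nat.eq_zero_or_pos m with h0 | h1
    · subst h0
      have hs : ∀ j : Fin n, V 0 j = BB.star := by
        intro j; simp only [hV]; rw [if_neg (by omega), if_neg (by omega)]
      simp [Tword, hs, Tcell_star_right]
    · have hj0 : (m - 1) / 2 < n := by omega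
      set j0 : Fin n := ⟨(m - 1) / 2, hj0⟩ with hj0def
      have hother : ∀ j : Fin n, j ≠ j0 → V m j = BB.star := by
        intro j hne
        have hval : (j : ℕ) ≠ (m - 1) / 2 := fun h => hne (Fin.ext h)
        simp only [hV]; rw [if_neg (by omega), if_neg (by omega)]
      have hTw : Tword (U x) (V m) = Tcell (U x j0) (V m j0) := by
        rcases h : Tcell (U x j0) (V m j0) with _ | _
        · simp only [Tword]
          rw [decide_eq_false]
          intro hall
          have := hall j0
          rw [h] at this
          exact Bool.false_ne_true this
        · simp only [Tword]
          rw [decide_eq_true]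
          intro j
          by_cases hj : j = j0
          · rw [hj, h]
          · rw [hother j hj, Tcell_star_right]
      rw [hTw]
      have hj0v : (j0 : ℕ) = (m - 1) / 2 := rfl
      rcases Nat.even_or_odd m with he | ho
      · have hm2 : m % 2 = 0 := Nat.even_iff.mp he
        have h2' : m = 2 * (j0 : ℕ) + 2 := by omega
        have hV0 : V m j0 = BB.reject := by
          simp only [hV]; rw [if_neg (by omega), if_pos h2']
        rw [hV0]
        by_cases hx : m ≤ (x : ℕ)
        · have hUx : U x j0 = BB.star := by
            simp only [hU]; rw [if_neg (by omega), if_neg (by omega)]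
          rw [hUx]; simp [hx, Tcell]
        · have hUx : U x j0 = BB.zero ∨ U x j0 = BB.one := by
            simp only [hU]; split_ifs with a b
            · left; rfl
            · right; rfl
            · omega
          rcases hUx with h | h <;> rw [h] <;> simp [hx, Tcell]
      · have hm2 : m % 2 = 1 := Nat.odd_iff.mp ho
        have h1' : m = 2 * (j0 : ℕ) + 1 := by omega
        have hV0 : V m j0 = BB.one := by simp only [hV]; rw [if_pos h1']
        rw [hV0]
        by_cases hx : m ≤ (x : ℕ)
        · have hUx : U x j0 = BB.one ∨ U x j0 = BB.star := by
            simp only [hU]; split_ifs with a b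
            · omega
            · left; rfl
            · right; rfl
          rcases hUx with h | h <;> rw [h] <;> simp [hx, Tcell]
        · have hUx : U x j0 = BB.zero := by simp only [hU]; rw [if_pos (by omega)]
          rw [hUx]; simp [hx, Tcell]
  refine ⟨U, fun f => if h : f ∈ Gset q then V ((h.choose : Fin q) : ℕ) else fun _ => BB.star,
    ?_, ?_, ?_⟩
  · intro x j
    simp only [hU, Bstar]
    split_ifs <;> simp
  · intro f _ j
    dsimp only
    split_ifs <;> exact Set.mem_univ _
  · rintro f ⟨t, rfl⟩ x
    have hf' : (fun x : Fin q => decide (t ≤ x)) ∈ Gset q := ⟨t, rfl⟩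
    dsimp only
    rw [dif_pos hf']
    have hchoose : hf'.choose = t := (ft_inj hf'.choose_spec.symm)
    rw [hchoose]
    have : decide (t ≤ x) = decide ((t : ℕ) ≤ (x : ℕ)) :=
      decide_eq_decide.mpr Fin.le_def
    rw [this]
    exact main (t : ℕ) (by omega) x

lemma Gset_bound (q n : ℕ) (hn : 1 ≤ n)
    (h : Implementable Bdot Bdot n q (Gset q)) : q ≤ 2 * n + 1 := by
  classical
  by_contra hqn
  push_neg at hqn
  obtain ⟨u, θ, -, -, hT⟩ := h
  set F : Fin q → (Fin q → Bool) := fun t => fun x => decide (t ≤ x) with hF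
  have hmem : ∀ t, F t ∈ Gset q := fun t => ⟨t, rfl⟩
  have hTt : ∀ t x : Fin q, decide ((t : ℕ) ≤ (x : ℕ)) = Tword (u x) (θ (F t)) := by
    intro t x
    rw [← hT (F t) (hmem t) x]
    simp only [hF]
    exact decide_eq_decide.mpr Fin.le_def.symm
  have htrue : ∀ t x : Fin q, (t : ℕ) ≤ (x : ℕ) →
      ∀ j, Tcell (u x j) (θ (F t) j) = true := by
    intro t x hle j
    have h' : Tword (u x) (θ (F t)) = true := by
      rw [← hTt t x]; exact decide_eq_true hle
    exact of_decide_eq_true h' j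
  have hfalse : ∀ t : Fin q, 1 ≤ (t : ℕ) →
      ∃ j, Tcell (u ⟨(t : ℕ) - 1, lt_of_le_of_lt (Nat.sub_le _ _) t.isLt⟩ j)
        (θ (F t) j) = false := by
    intro t ht
    have hx : ¬ ((t : ℕ) ≤ (((⟨(t : ℕ) - 1, lt_of_le_of_lt (Nat.sub_le _ _) t.isLt⟩ : Fin q)) : ℕ)) := by
      simp only [Fin.val_mk]; omega
    have hh := hTt t ⟨(t : ℕ) - 1, lt_of_le_of_lt (Nat.sub_le _ _) t.isLt⟩
    rw [decide_eq_false hx] at hh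
    have h2 := of_decide_eq_false hh.symm
    push_neg at h2
    obtain ⟨j, hj⟩ := h2
    exact ⟨j, by simpa using hj⟩
  set g : Fin q → Fin n := fun t => if h : 1 ≤ (t : ℕ) then (hfalse t h).choose else ⟨0, hn⟩
    with hg
  have hgspec : ∀ t : Fin q, (ht : 1 ≤ (t : ℕ)) →
      Tcell (u ⟨(t : ℕ) - 1, lt_of_le_of_lt (Nat.sub_le _ _) t.isLt⟩ (g t))
        (θ (F t) (g t)) = false := by
    intro t ht
    simp only [hg, dif_pos ht]
    exact (hfalse t ht).choose_spec
  have key : ∀ t1 t2 t3 : Fin q, t1 < t2 → t2 < t3 →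
      1 ≤ (t1 : ℕ) → 1 ≤ (t2 : ℕ) → 1 ≤ (t3 : ℕ) →
      ∀ j : Fin n, g t1 = j → g t2 = j → g t3 = j → False := by
    intro t1 t2 t3 h12 h23 ht1 ht2 ht3 j hg1 hg2 hg3
    have h12' : (t1 : ℕ) < (t2 : ℕ) := h12
    have h23' : (t2 : ℕ) < (t3 : ℕ) := h23
    have p2lt : (t2 : ℕ) - 1 < q := lt_of_le_of_lt (Nat.sub_le _ _) t2.isLt
    have p3lt : (t3 : ℕ) - 1 < q := lt_of_le_of_lt (Nat.sub_le _ _) t3.isLt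
    have hA := hgspec t1 ht1
    have hB := hgspec t2 ht2
    have hC := hgspec t3 ht3
    rw [hg1] at hA
    rw [hg2] at hB
    rw [hg3] at hC
    have hB1 : Tcell (u ⟨(t2 : ℕ) - 1, p2lt⟩ j) (θ (F t1) j) = true :=
      htrue t1 ⟨(t2 : ℕ) - 1, p2lt⟩ (by simp only [Fin.val_mk]; omega) j
    have hC1 : Tcell (u ⟨(t3 : ℕ) - 1, p3lt⟩ j) (θ (F t1) j) = true :=
      htrue t1 ⟨(t3 : ℕ) - 1, p3lt⟩ (by simp only [Fin.val_mk]; omega) j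
    have hC2 : Tcell (u ⟨(t3 : ℕ) - 1, p3lt⟩ j) (θ (F t2) j) = true :=
      htrue t2 ⟨(t3 : ℕ) - 1, p3lt⟩ (by simp only [Fin.val_mk]; omega) j
    have hstar := star_of _ _ _ _ _ hA hB1 hB hC1 hC2
    rw [hstar] at hC
    rw [Tcell_star_left] at hC
    exact Bool.noConfusion hC
  set S : Finset (Fin q) := Finset.univ.filter (fun t => 1 ≤ (t : ℕ)) with hS
  have hScard : S.card = q - 1 := by
    have hEq : S = Finset.univ.erase ⟨0, by omega⟩ := by
      ext t
      simp [hS, Finset.mem_erase, Fin.ext_iff]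
      omega
    rw [hEq, Finset.card_erase_of_mem (Finset.mem_univ _), Finset.card_univ, Fintype.card_fin]
  obtain ⟨j, -, hj⟩ := Finset.exists_lt_card_fiber_of_mul_lt_card_of_maps_to
    (f := g) (s := S) (t := (Finset.univ : Finset (Fin n))) (n := 2)
    (fun a _ => Finset.mem_univ _)
    (by rw [Finset.card_univ, Fintype.card_fin, hScard]; omega)
  obtain ⟨a, b, c, ha, hb, hc, hab, hac, hbc⟩ := Finset.two_lt_card_iff.mp hj
  simp only [Finset.mem_filter, hS, Finset.mem_univ, true_and] at ha hb hc
  obtain ⟨ha1, ha2⟩ := ha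
  obtain ⟨hb1, hb2⟩ := hb
  obtain ⟨hc1, hc2⟩ := hc
  rcases hab.lt_or_gt with h1 | h1 <;> rcases hac.lt_or_gt with h2 | h2 <;>
    rcases hbc.lt_or_gt with h3 | h3
  · exact key a b c h1 h3 ha1 hb1 hc1 j ha2 hb2 hc2
  · exact key a c b h2 h3 ha1 hc1 hb1 j ha2 hc2 hb2
  · exact absurd (h1.trans h3) (not_lt.mpr h2.le)
  · exact key c a b h2 h1 hc1 ha1 hb1 j hc2 ha2 hb2
  · exact key b a c h1 h2 hb1 ha1 hc1 j hb2 ha2 hc2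
  · exact absurd (h2.trans h3) (not_lt.mpr h1.le)
  · exact key b c a h3 h2 hb1 hc1 ha1 j hb2 hc2 ha2
  · exact key c b a h3 h1 hc1 hb1 ha1 j hc2 hb2 ha2


theorem Gset_implementable_starReject_rejectReject (q n : ℕ)
    (hq : 2 ≤ q) (hn : 1 ≤ n) :
    (Implementable Bstar Bdot n q (Gset q) ↔ q ≤ 2 * n + 1) ∧
    (Implementable Bdot Bdot n q (Gset q) ↔ q ≤ 2 * n + 1) := by
  have himp : Implementable Bstar Bdot n q (Gset q) → Implementable Bdot Bdot n q (Gset q) := by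
    rintro ⟨u, θ, -, h2, h3⟩
    exact ⟨u, θ, fun x j => Set.mem_univ _, h2, h3⟩
  exact ⟨⟨fun h => Gset_bound q n hn (himp h), fun h => Gset_impl q n h⟩,
    ⟨Gset_bound q n hn, fun h => himp (Gset_impl q n h)⟩⟩
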